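/- Let a(t) = exp(-eᵗ) and aₙ = a(n). Then, as r → ∞: N₁(r) = log log r + log log log r + O(1); log μ(r) = log r · log log r + O(log r); and S(r) = Θ(log r · (log log r)²), where N₁(r) = #{n : aₙrⁿ ≥ 1}, μ(r) = maxₙ aₙrⁿ, and S(r) = 2Σ_{n∈𝒩₁(r)} log(aₙrⁿ). -/

import Mathlib

open Filter Asymptotics

/-- The coefficients `aₙ = exp (-eⁿ)`. -/
noncomputable def a18 (n : ℕ) : ℝ := Real.exp (-Real.exp n)

/-- `N₁(r) = #{n : aₙ rⁿ ≥ 1}`. -/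
noncomputable def N1' (r : ℝ) : ℝ := ({n : ℕ | 1 ≤ a18 n * r ^ n}.ncard : ℝ)

/-- `μ(r) = maxₙ aₙ rⁿ` (the maximal term). -/
noncomputable def mu18 (r : ℝ) : ℝ := ⨆ n : ℕ, a18 n * r ^ n

/-- `S(r) = 2 Σ_{n ∈ 𝒩₁(r)} log (aₙ rⁿ)`. -/
noncomputable def S18 (r : ℝ) : ℝ :=
  2 * ∑' n : ℕ,
    Set.indicator {n : ℕ | 1 ≤ a18 n * r ^ n} (fun n => Real.log (a18 n * r ^ n)) n

lemma log_le_half {x : ℝ} (hx : 1 ≤ x) : Real.log x ≤ x / 2 := by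
  have hx0 : (0:ℝ) < x := by linarith
  have hs : Real.sqrt x * Real.sqrt x = x := Real.mul_self_sqrt hx0.le
  have h1 : Real.log x = 2 * Real.log (Real.sqrt x) := by
    conv_lhs => rw [← hs]
    rw [Real.log_mul (by positivity) (by positivity)]; ring
  have h2 : Real.log (Real.sqrt x) ≤ Real.sqrt x - 1 :=
    Real.log_le_sub_one_of_pos (by positivity)
  nlinarith [sq_nonneg (Real.sqrt x - 2)]

lemma geom_bound (N : ℕ) : ∑ n ∈ Finset.range (N+1), Real.exp n ≤ 2 * Real.exp N := by
  induction N with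
  | zero => norm_num
  | succ N ih =>
    rw [Finset.sum_range_succ]
    have h : Real.exp ((N:ℝ)+1) = Real.exp N * Real.exp 1 := by rw [← Real.exp_add]
    have he : (2:ℝ) ≤ Real.exp 1 := by have := Real.add_one_le_exp (1:ℝ); linarith
    have hpos := Real.exp_pos (N:ℝ)
    push_cast
    nlinarith [ih]

lemma sq_le_sum (N : ℕ) : (N:ℝ)^2 ≤ 2 * ∑ n ∈ Finset.Icc 1 N, (n:ℝ) := by
  induction N with
  | zero => simp
  | succ N ih =>
    rw [Finset.sum_Icc_succ_top (by omega)]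
    push_cast
    nlinarith [ih]

set_option maxHeartbeats 1000000 in
lemma key18 (r : ℝ) (hr : Real.exp (Real.exp 20) ≤ r) :
    0 < Real.log r ∧ 20 ≤ Real.log (Real.log r) ∧
    |N1' r - (Real.log (Real.log r) + Real.log (Real.log (Real.log r)))| ≤ 1 ∧
    |Real.log (mu18 r) - Real.log r * Real.log (Real.log r)| ≤ 2 * Real.log r ∧
    Real.log r * Real.log (Real.log r) ^ 2 / 2 ≤ S18 r ∧
    S18 r ≤ 8 * (Real.log r * Real.log (Real.log r) ^ 2) := by
  have hr0 : (0:ℝ) < r := lt_of_lt_of_le (Real.exp_pos _) hr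
  set L := Real.log r with hLdef
  clear_value L
  set t := Real.log L with htdef
  clear_value t
  have hLe : Real.exp 20 ≤ L := by
    rw [hLdef]
    have := Real.log_le_log (Real.exp_pos (Real.exp 20)) hr
    rwa [Real.log_exp] at this
  have hLpos : 0 < L := lt_of_lt_of_le (Real.exp_pos _) hLe
  have ht : 20 ≤ t := by
    rw [htdef]
    have := Real.log_le_log (Real.exp_pos (20:ℝ)) hLe
    rwa [Real.log_exp] at this
  have htpos : (0:ℝ) < t := by linarith
  have hrL : r = Real.exp L := by rw [hLdef, Real.exp_log hr0]
  have hLt : L = Real.exp t := by rw [htdef, Real.exp_log hLpos]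
  have hterm : ∀ n : ℕ, a18 n * r ^ n = Real.exp ((n:ℝ) * L - Real.exp n) := by
    intro n
    rw [a18, hrL, ← Real.exp_nat_mul, ← Real.exp_add]
    congr 1; ring
  have hmem : ∀ n : ℕ, (1 ≤ a18 n * r ^ n) ↔ Real.exp n ≤ (n:ℝ) * L := by
    intro n
    rw [hterm n, Real.one_le_exp_iff]
    constructor <;> intro h <;> linarith
  set A : Set ℕ := {n : ℕ | 1 ≤ a18 n * r ^ n} with hAdef
  have hmemA : ∀ n : ℕ, n ∈ A ↔ Real.exp n ≤ (n:ℝ) * L := fun n => hmem n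
  clear_value A
  have h0A : 0 ∉ A := by
    rw [hmemA]; push_cast; rw [Real.exp_zero]; intro h; linarith
  have hupA : ∀ n ∈ A, (n:ℝ) ≤ 2 * t := by
    intro n hn
    rw [hmemA] at hn
    have hn1 : 1 ≤ n := by
      by_contra h
      push_neg at h
      interval_cases n
      · exact h0A (by rw [hmemA]; exact hn)
    have hcast : (1:ℝ) ≤ (n:ℝ) := by exact_mod_cast hn1
    have h2 : (n:ℝ) ≤ Real.log ((n:ℝ) * L) := by
      have := Real.log_le_log (Real.exp_pos (n:ℝ)) hn
      rwa [Real.log_exp] at this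
    rw [Real.log_mul (by linarith) (ne_of_gt hLpos)] at h2
    have h3 := log_le_half hcast
    linarith
  have hAfin : A.Finite := by
    apply Set.Finite.subset (Set.finite_Iic ⌊2*t⌋₊)
    intro n hn
    exact Set.mem_Iic.2 (Nat.le_floor (hupA n hn))
  have h1A : 1 ∈ A := by
    rw [hmemA]
    push_cast
    rw [one_mul, hLt]
    exact Real.exp_le_exp.2 (by linarith)
  have hBddA : BddAbove A := hAfin.bddAbove
  set N := sSup A with hNdef
  have hNA : N ∈ A := Nat.sSup_mem ⟨1, h1A⟩ hBddA
  have hN1 : 1 ≤ N := le_csSup hBddA h1A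
  have hNs : N + 1 ∉ A := fun h => by have := le_csSup hBddA h; omega
  clear_value N
  have hdown : ∀ m n : ℕ, 1 ≤ m → m ≤ n → n ∈ A → m ∈ A := by
    intro m n hm hmn hn
    rw [hmemA] at hn ⊢
    have h1 : Real.exp (n:ℝ) = Real.exp (m:ℝ) * Real.exp ((n:ℝ) - m) := by
      rw [← Real.exp_add]; congr 1; ring
    have h2 : (n:ℝ) - m + 1 ≤ Real.exp ((n:ℝ) - m) := Real.add_one_le_exp _
    have hmr : (1:ℝ) ≤ (m:ℝ) := by exact_mod_cast hm
    have hnm : (m:ℝ) ≤ (n:ℝ) := by exact_mod_cast hmn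
    have hem := Real.exp_pos (m:ℝ)
    have key1 : (n:ℝ) * Real.exp (m:ℝ) ≤ (m:ℝ) * Real.exp (n:ℝ) := by
      rw [h1]
      nlinarith [mul_le_mul_of_nonneg_left h2 (by positivity : (0:ℝ) ≤ (m:ℝ) * Real.exp (m:ℝ)),
        mul_nonneg hem.le (mul_nonneg (by linarith : (0:ℝ) ≤ (m:ℝ) - 1) (by linarith : (0:ℝ) ≤ (n:ℝ) - m))]
    have hnpos : (0:ℝ) < (n:ℝ) := by linarith
    nlinarith [hn]
  have hAeq : A = Set.Icc 1 N := by
    ext n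
    simp only [Set.mem_Icc]
    constructor
    · intro hn
      refine ⟨?_, by rw [hNdef]; exact le_csSup hBddA hn⟩
      rcases Nat.eq_zero_or_pos n with h | h
      · exact absurd (h ▸ hn) h0A
      · exact h
    · rintro ⟨h1n, hnN⟩
      exact hdown n N h1n hnN hNA
  have hcard : N1' r = ((N:ℕ):ℝ) := by
    rw [N1', ← hAdef, hAeq, ← Finset.coe_Icc, Set.ncard_coe_finset, Nat.card_Icc]
    simp
  set x := (N:ℝ) with hxdef
  clear_value x
  have hx1 : (1:ℝ) ≤ x := by rw [hxdef]; exact_mod_cast hN1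
  have hNineq : Real.exp x ≤ x * L := by rw [hxdef]; exact (hmemA N).1 hNA
  have hx2t : x ≤ 2 * t := by rw [hxdef]; exact hupA N hNA
  -- upper bound on x
  have hxup : x ≤ t + Real.log t + 1 := by
    have h2 : x ≤ Real.log (x * L) := by
      have := Real.log_le_log (Real.exp_pos x) hNineq
      rwa [Real.log_exp] at this
    rw [Real.log_mul (by linarith) (ne_of_gt hLpos)] at h2
    have h3 : Real.log x ≤ Real.log (2 * t) := Real.log_le_log (by linarith) hx2t
    rw [Real.log_mul (by norm_num) (ne_of_gt htpos)] at h3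
    have h4 : Real.log 2 ≤ 1 := by
      have := Real.log_le_sub_one_of_pos (by norm_num : (0:ℝ) < 2); linarith
    linarith
  -- lower bound on x
  have hxlow : t + Real.log t - 1 ≤ x := by
    have h1 : ¬ Real.exp ((N+1:ℕ):ℝ) ≤ ((N+1:ℕ):ℝ) * L := fun h => hNs ((hmemA _).2 h)
    push_neg at h1
    push_cast at h1
    rw [← hxdef] at h1
    have h2 : Real.log ((x+1) * L) < x + 1 := by
      have := Real.log_lt_log (by positivity) h1
      rwa [Real.log_exp] at this
    rw [Real.log_mul (by linarith) (ne_of_gt hLpos)] at h2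
    have h3 : (0:ℝ) ≤ Real.log (x+1) := Real.log_nonneg (by linarith)
    have h4 : t < x + 1 := by linarith
    have h5 : Real.log t ≤ Real.log (x+1) := Real.log_le_log htpos (by linarith)
    linarith
  have hlogt : Real.log t ≥ 0 := Real.log_nonneg (by linarith)
  -- S part
  have hS : S18 r = 2 * ∑ n ∈ Finset.Icc 1 N, ((n:ℝ) * L - Real.exp n) := by
    unfold S18
    rw [← hAdef]
    congr 1
    rw [tsum_eq_sum (s := Finset.Icc 1 N) ?h0]
    case h0 =>
      intro n hn
      apply Set.indicator_of_notMem
      rw [hAeq]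
      simp only [Finset.mem_Icc, not_and, not_le] at hn
      simp only [Set.mem_Icc, not_and, not_le]
      exact hn
    apply Finset.sum_congr rfl
    intro n hn
    rw [Set.indicator_of_mem, hterm, Real.log_exp]
    rw [hAeq]
    simp only [Finset.mem_Icc] at hn
    exact Set.mem_Icc.2 hn
  have hcardIcc : (Finset.Icc 1 N).card = N := by rw [Nat.card_Icc]; omega
  have hsum_ub : ∑ n ∈ Finset.Icc 1 N, ((n:ℝ) * L - Real.exp n) ≤ x * (x * L) := by
    calc ∑ n ∈ Finset.Icc 1 N, ((n:ℝ) * L - Real.exp n)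
        ≤ ∑ n ∈ Finset.Icc 1 N, x * L := by
          apply Finset.sum_le_sum
          intro n hn
          simp only [Finset.mem_Icc] at hn
          have h5 : (n:ℝ) ≤ x := by rw [hxdef]; exact_mod_cast hn.2
          nlinarith [Real.exp_pos (n:ℝ)]
    _ = x * (x * L) := by
          rw [Finset.sum_const, hcardIcc, nsmul_eq_mul, hxdef]
          try ring
  have hsum_n : x^2 ≤ 2 * ∑ n ∈ Finset.Icc 1 N, (n:ℝ) := by
    rw [hxdef]; exact sq_le_sum N
  have hsum_exp : ∑ n ∈ Finset.Icc 1 N, Real.exp (n:ℝ) ≤ 2 * Real.exp x := by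
    rw [hxdef]
    refine le_trans (Finset.sum_le_sum_of_subset_of_nonneg ?_ ?_) (geom_bound N)
    · intro n hn
      simp only [Finset.mem_Icc] at hn
      simp only [Finset.mem_range]
      omega
    · intro n _ _
      exact (Real.exp_pos _).le
  have hsplit : ∑ n ∈ Finset.Icc 1 N, ((n:ℝ) * L - Real.exp n)
      = (∑ n ∈ Finset.Icc 1 N, (n:ℝ)) * L - ∑ n ∈ Finset.Icc 1 N, Real.exp (n:ℝ) := by
    rw [Finset.sum_sub_distrib, Finset.sum_mul]
  clear hAfin hBddA hdown hNs hNA h0A hupA hmem hmemA hterm h1A hAeq hAdef hNdef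
  clear A
  have hxt : (t-1)^2 ≤ x^2 := by nlinarith
  have hSlo : L * t ^ 2 / 2 ≤ S18 r := by
    rw [hS, hsplit]
    have h1 : Real.exp x ≤ 2 * t * L := by nlinarith
    have hQ : ∑ n ∈ Finset.Icc 1 N, Real.exp (n:ℝ) ≤ 4 * t * L := by nlinarith
    have hP2 : (t-1)^2 * L ≤ 2 * (∑ n ∈ Finset.Icc 1 N, (n:ℝ)) * L := by
      nlinarith [mul_le_mul_of_nonneg_right hsum_n hLpos.le,
        mul_le_mul_of_nonneg_right hxt hLpos.le]
    nlinarith [mul_nonneg (show (0:ℝ) ≤ t^2/2 - 10*t + 1 by nlinarith) hLpos.le]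
  have hSup : S18 r ≤ 8 * (L * t ^ 2) := by
    rw [hS]
    have hx2 : x^2 ≤ 4 * t^2 := by nlinarith
    nlinarith [hsum_ub, mul_le_mul_of_nonneg_right hx2 hLpos.le]
  refine ⟨hLpos, ht, ?_, ?_, hSlo, hSup⟩
  · rw [hcard]
    rw [abs_le]
    constructor <;> [linarith [hxlow]; linarith [hxup]]
  · -- mu part
    have hterm : ∀ n : ℕ, a18 n * r ^ n = Real.exp ((n:ℝ) * L - Real.exp n) := by
      intro n
      rw [a18, hrL, ← Real.exp_nat_mul, ← Real.exp_add]
      congr 1; ring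
    have hub : ∀ n : ℕ, a18 n * r ^ n ≤ Real.exp (L * (t - 1)) := by
      intro n
      rw [hterm n]
      apply Real.exp_le_exp.2
      have h1 : Real.exp (n:ℝ) = L * Real.exp ((n:ℝ) - t) := by
        rw [hLt, ← Real.exp_add]; congr 1; ring
      have h2 : (n:ℝ) - t + 1 ≤ Real.exp ((n:ℝ) - t) := Real.add_one_le_exp _
      nlinarith [mul_le_mul_of_nonneg_left h2 hLpos.le]
    have hBddR : BddAbove (Set.range fun n : ℕ => a18 n * r ^ n) := by
      refine ⟨Real.exp (L * (t-1)), ?_⟩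
      rintro y ⟨n, rfl⟩
      exact hub n
    have hmu_ub : mu18 r ≤ Real.exp (L * (t-1)) := ciSup_le hub
    have hm_le : ((⌊t⌋₊:ℕ):ℝ) ≤ t := Nat.floor_le htpos.le
    have hm_ge : t - 1 ≤ ((⌊t⌋₊:ℕ):ℝ) := by have := Nat.lt_floor_add_one t; linarith
    have hmu_lb : Real.exp (L * t - 2 * L) ≤ mu18 r := by
      refine le_trans ?_ (le_ciSup hBddR ⌊t⌋₊)
      rw [hterm ⌊t⌋₊]
      apply Real.exp_le_exp.2
      have hexpm : Real.exp ((⌊t⌋₊:ℕ):ℝ) ≤ L := by rw [hLt]; exact Real.exp_le_exp.2 hm_le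
      nlinarith [mul_le_mul_of_nonneg_right hm_ge hLpos.le]
    have hmupos : 0 < mu18 r := lt_of_lt_of_le (Real.exp_pos _) hmu_lb
    have hlogub : Real.log (mu18 r) ≤ L * (t - 1) :=
      (Real.log_le_iff_le_exp hmupos).2 hmu_ub
    have hloglb : L * t - 2 * L ≤ Real.log (mu18 r) :=
      (Real.le_log_iff_exp_le hmupos).2 hmu_lb
    rw [abs_le]
    constructor <;> nlinarith

/-- For `aₙ = exp (-eⁿ)`, as `r → ∞`:
`N₁(r) = log log r + log log log r + O(1)`,
`log μ(r) = log r · log log r + O(log r)`, and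
`S(r) = Θ(log r · (log log r)²)`. -/
theorem stmt18 :
    (fun r : ℝ => N1' r - (Real.log (Real.log r) + Real.log (Real.log (Real.log r))))
        =O[atTop] (fun _ : ℝ => (1 : ℝ)) ∧
    (fun r : ℝ => Real.log (mu18 r) - Real.log r * Real.log (Real.log r))
        =O[atTop] (fun r : ℝ => Real.log r) ∧
    S18 =Θ[atTop] (fun r : ℝ => Real.log r * (Real.log (Real.log r)) ^ 2) := by
  have hev : ∀ᶠ r : ℝ in atTop, Real.exp (Real.exp 20) ≤ r := eventually_ge_atTop _
  refine ⟨?_, ?_, ?_, ?_⟩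
  · rw [Asymptotics.isBigO_iff]
    refine ⟨1, ?_⟩
    filter_upwards [hev] with r hr
    obtain ⟨hL, ht, h1, _, _, _⟩ := key18 r hr
    simpa using h1
  · rw [Asymptotics.isBigO_iff]
    refine ⟨2, ?_⟩
    filter_upwards [hev] with r hr
    obtain ⟨hL, ht, _, h2, _, _⟩ := key18 r hr
    rw [Real.norm_eq_abs, Real.norm_eq_abs, abs_of_pos hL]
    linarith [abs_le.1 h2]
  · rw [Asymptotics.isBigO_iff]
    refine ⟨8, ?_⟩
    filter_upwards [hev] with r hr
    obtain ⟨hL, ht, _, _, h3, h4⟩ := key18 r hr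
    have htpos : 0 < Real.log (Real.log r) := by linarith
    have hpos : 0 < Real.log r * Real.log (Real.log r) ^ 2 := by positivity
    have hSpos : 0 < S18 r := by linarith
    rw [Real.norm_eq_abs, Real.norm_eq_abs, abs_of_pos hpos, abs_of_pos hSpos]
    linarith
  · rw [Asymptotics.isBigO_iff]
    refine ⟨2, ?_⟩
    filter_upwards [hev] with r hr
    obtain ⟨hL, ht, _, _, h3, h4⟩ := key18 r hr
    have htpos : 0 < Real.log (Real.log r) := by linarith
    have hpos : 0 < Real.log r * Real.log (Real.log r) ^ 2 := by positivity
    have hSpos : 0 < S18 r := by linarith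
    rw [Real.norm_eq_abs, Real.norm_eq_abs, abs_of_pos hSpos, abs_of_pos hpos]
    linarith
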